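/- For every α > 0 and β > 0 there exists p₀ such that for every prime p ≥ p₀ and all sets E₁, E₂ ⊆ ℤ/pℤ with |E₁| ≥ αp and |E₂| ≥ βp, every element of ℤ/pℤ can be written as (a₁ − b₁)(a₂ − b₂) with a₁, b₁ ∈ E₁ and a₂, b₂ ∈ E₂. -/

import Mathlib

open Finset Complex

section Aux

variable {p : ℕ} [hp : Fact p.Prime]

instance : NeZero p := ⟨hp.out.ne_zero⟩

local notation "ψ" => ZMod.stdAddChar (N := p)

lemma psi_conj (z : ZMod p) : (starRingEnd ℂ) (ψ z) = ψ (-z) := by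
  rw [AddChar.starComp_apply (by rw [ZMod.ringChar_zmod_n]; exact hp.out.pos), AddChar.inv_apply]

lemma psi_orth (z : ZMod p) : ∑ t : ZMod p, ψ (t * z) = if z = 0 then (p : ℂ) else 0 := by
  rw [AddChar.sum_mulShift z (ZMod.isPrimitive_stdAddChar p)]
  simp [ZMod.card]

/-- the set of nonzero elements -/
noncomputable def e0 : Finset (ZMod p) := Finset.univ.erase 0

lemma card_e0 : (e0 (p := p)).card = p - 1 := by
  simp [e0, Finset.card_erase_of_mem, ZMod.card]

lemma mem_e0 {s : ZMod p} : s ∈ e0 ↔ s ≠ 0 := by simp [e0]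

lemma sum_psi_e0 : ∑ s ∈ e0 (p := p), ψ s = -1 := by
  have h := psi_orth (p := p) 1
  simp only [mul_one, if_neg (one_ne_zero)] at h
  have h2 : ∑ s ∈ e0 (p := p), ψ s + ψ 0 = 0 := by
    rw [← h]
    rw [e0, Finset.sum_erase_add]
    exact Finset.mem_univ 0
  simp only [AddChar.map_zero_eq_one] at h2
  linear_combination h2

/-- Kloosterman sum -/
noncomputable def Kl (a b : ZMod p) : ℂ := ∑ s ∈ e0, ψ (a * s + b * s⁻¹)

lemma Kl_zero_zero : Kl (p := p) 0 0 = (p : ℂ) - 1 := by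
  simp only [Kl, zero_mul, add_zero, AddChar.map_zero_eq_one, Finset.sum_const, card_e0,
    nsmul_eq_mul, mul_one]
  have : (1:ℕ) ≤ p := hp.out.one_lt.le
  push_cast [Nat.cast_sub this]
  ring

lemma Kl_left_zero {a : ZMod p} (ha : a ≠ 0) : Kl a 0 = -1 := by
  have : Kl a 0 = ∑ s ∈ e0 (p := p), ψ (a * s) := by
    simp [Kl]
  rw [this]
  rw [show ∑ s ∈ e0 (p := p), ψ (a * s) = ∑ s ∈ e0 (p := p), ψ s from
    Finset.sum_nbij' (fun s => a * s) (fun s => a⁻¹ * s)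
      (fun s hs => mem_e0.mpr (mul_ne_zero ha (mem_e0.mp hs)))
      (fun s hs => mem_e0.mpr (mul_ne_zero (inv_ne_zero ha) (mem_e0.mp hs)))
      (fun s _ => by field_simp) (fun s _ => by field_simp) (fun s _ => rfl)]
  exact sum_psi_e0

lemma Kl_zero_right {b : ZMod p} (hb : b ≠ 0) : Kl 0 b = -1 := by
  have : Kl 0 b = ∑ s ∈ e0 (p := p), ψ (b * s⁻¹) := by
    simp [Kl]
  rw [this]
  rw [show ∑ s ∈ e0 (p := p), ψ (b * s⁻¹) = ∑ s ∈ e0 (p := p), ψ s from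
    Finset.sum_nbij' (fun s => b * s⁻¹) (fun w => b * w⁻¹)
      ?_ ?_ ?_ ?_ ?_]
  · exact sum_psi_e0
  · exact fun s hs => mem_e0.mpr (mul_ne_zero hb (inv_ne_zero (mem_e0.mp hs)))
  · exact fun w hw => mem_e0.mpr (mul_ne_zero hb (inv_ne_zero (mem_e0.mp hw)))
  · intro s hs
    have hs0 := mem_e0.mp hs
    show b * (b * s⁻¹)⁻¹ = s
    rw [mul_inv_rev, inv_inv]
    field_simp
  · intro w hw
    have hw0 := mem_e0.mp hw
    show b * (b * w⁻¹)⁻¹ = w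
    rw [mul_inv_rev, inv_inv]
    field_simp
  · exact fun s _ => rfl

lemma Kl_invar {a b c : ZMod p} (hc : c ≠ 0) : Kl (a * c) (b * c⁻¹) = Kl a b := by
  unfold Kl
  refine Finset.sum_nbij' (fun s => c * s) (fun w => c⁻¹ * w) ?_ ?_ ?_ ?_ ?_
  · exact fun s hs => mem_e0.mpr (mul_ne_zero hc (mem_e0.mp hs))
  · exact fun w hw => mem_e0.mpr (mul_ne_zero (inv_ne_zero hc) (mem_e0.mp hw))
  · intro s _; field_simp
  · intro s _; field_simp
  · intro s hs
    have hs0 := mem_e0.mp hs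
    congr 1
    rw [mul_inv_rev]
    field_simp


noncomputable def E2 : Finset (ZMod p × ZMod p) := e0 ×ˢ e0

noncomputable def E4 : Finset ((ZMod p × ZMod p) × (ZMod p × ZMod p)) := E2 ×ˢ E2

/-- for `w = ((s₁,s₃),(s₂,s₄))` : `s₁+s₂-s₃-s₄` -/
noncomputable def U (w : (ZMod p × ZMod p) × (ZMod p × ZMod p)) : ZMod p :=
  w.1.1 + w.2.1 - w.1.2 - w.2.2

noncomputable def V (w : (ZMod p × ZMod p) × (ZMod p × ZMod p)) : ZMod p :=
  w.1.1⁻¹ + w.2.1⁻¹ - w.1.2⁻¹ - w.2.2⁻¹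

noncomputable def N4 : ℕ := ((E4 (p := p)).filter (fun w => U w = 0 ∧ V w = 0)).card

lemma Kl_pointwise (a b : ZMod p) :
    (normSq (Kl a b) : ℂ)^2 = ∑ w ∈ E4 (p := p), ψ (a * U w) * ψ (b * V w) := by
  have hconj : (starRingEnd ℂ) (Kl a b) = ∑ s ∈ e0 (p := p), ψ (-(a * s + b * s⁻¹)) := by
    rw [Kl, map_sum]
    exact sum_congr rfl fun s _ => psi_conj _
  have key : (normSq (Kl a b) : ℂ)^2
      = (Kl a b * (starRingEnd ℂ) (Kl a b)) * (Kl a b * (starRingEnd ℂ) (Kl a b)) := by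
    rw [Complex.mul_conj]; push_cast; ring
  have h2 : Kl a b * (starRingEnd ℂ) (Kl a b)
      = ∑ q ∈ E2 (p := p), ψ ((a * q.1 + b * q.1⁻¹) - (a * q.2 + b * q.2⁻¹)) := by
    rw [hconj, Kl, Finset.sum_mul_sum, E2, ← Finset.sum_product']
    refine sum_congr rfl fun q _ => ?_
    rw [← AddChar.map_add_eq_mul]
    congr 1
    ring
  rw [key, h2, Finset.sum_mul_sum, E4, ← Finset.sum_product']
  refine sum_congr rfl fun w _ => ?_
  rw [← AddChar.map_add_eq_mul, ← AddChar.map_add_eq_mul]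
  congr 1
  rw [U, V]
  ring

lemma Kl_moment :
    ∑ a : ZMod p, ∑ b : ZMod p, (normSq (Kl a b) : ℂ)^2 = (p:ℂ)^2 * (N4 (p := p) : ℂ) := by
  simp only [Kl_pointwise]
  have swap1 : ∀ a : ZMod p, (∑ b : ZMod p, ∑ w ∈ E4 (p := p), ψ (a * U w) * ψ (b * V w))
      = ∑ w ∈ E4 (p := p), ∑ b : ZMod p, ψ (a * U w) * ψ (b * V w) := fun a => Finset.sum_comm
  rw [Finset.sum_congr rfl (fun a _ => swap1 a), Finset.sum_comm]
  have step : ∀ w ∈ E4 (p := p), (∑ a : ZMod p, ∑ b : ZMod p, ψ (a * U w) * ψ (b * V w))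
      = (p:ℂ)^2 * (if U w = 0 ∧ V w = 0 then 1 else 0) := by
    intro w _
    rw [← Finset.sum_mul_sum, psi_orth, psi_orth]
    split_ifs with h1 h2 h3 <;> simp_all <;> ring
  rw [Finset.sum_congr rfl step, ← Finset.mul_sum, Finset.sum_boole, N4]

lemma card_E2 : (E2 (p := p)).card = (p - 1)^2 := by
  simp [E2, Finset.card_product, card_e0]; ring

lemma N4_bound : N4 (p := p) ≤ 3 * (p - 1)^2 := by
  classical
  set T1 := (E4 (p := p)).filter (fun w => w.1.2 = w.1.1 ∧ w.2.2 = w.2.1) with hT1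
  set T2 := (E4 (p := p)).filter (fun w => w.1.2 = w.2.1 ∧ w.2.2 = w.1.1) with hT2
  set T3 := (E4 (p := p)).filter (fun w => w.2.1 = -w.1.1 ∧ w.2.2 = -w.1.2) with hT3
  have memE4 : ∀ w ∈ E4 (p := p), w.1.1 ≠ 0 ∧ w.1.2 ≠ 0 ∧ w.2.1 ≠ 0 ∧ w.2.2 ≠ 0 := by
    intro w hw
    rw [E4, Finset.mem_product] at hw
    obtain ⟨hw1, hw2⟩ := hw
    rw [E2, Finset.mem_product] at hw1 hw2
    exact ⟨mem_e0.mp hw1.1, mem_e0.mp hw1.2, mem_e0.mp hw2.1, mem_e0.mp hw2.2⟩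
  have subs : (E4 (p := p)).filter (fun w => U w = 0 ∧ V w = 0) ⊆ T1 ∪ T2 ∪ T3 := by
    intro w hw
    rw [Finset.mem_filter] at hw
    obtain ⟨hwE, hU, hV⟩ := hw
    obtain ⟨hs1, hs3, hs2, hs4⟩ := memE4 w hwE
    set s1 := w.1.1; set s3 := w.1.2; set s2 := w.2.1; set s4 := w.2.2
    rw [U] at hU
    rw [V] at hV
    have hU' : s1 + s2 = s3 + s4 := by linear_combination hU
    have hV' : s1⁻¹ + s2⁻¹ = s3⁻¹ + s4⁻¹ := by linear_combination hV
    simp only [Finset.mem_union]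
    by_cases hs : s1 + s2 = 0
    · refine Or.inr ?_
      rw [hT3, Finset.mem_filter]
      refine ⟨hwE, ?_, ?_⟩
      · show s2 = -s1; linear_combination hs
      · show s4 = -s3; linear_combination (hU' ▸ hs : s3 + s4 = 0)
    · have hcl : (s1 + s2) * (s3 * s4) = (s3 + s4) * (s1 * s2) := by
        field_simp at hV'
        linear_combination hV'
      have hcl2 : (s1 + s2) * (s3 * s4) = (s1 + s2) * (s1 * s2) := by rw [hcl, ← hU']
      have hprod : s1 * s2 = s3 * s4 := (mul_left_cancel₀ hs hcl2).symm
      have hroot : (s3 - s1) * (s3 - s2) = 0 := by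
        linear_combination (-s3) * hU' + hprod
      rcases mul_eq_zero.mp hroot with h | h
      · have h31 : s3 = s1 := by linear_combination h
        have h42 : s4 = s2 := by linear_combination -hU' - h31
        exact Or.inl (Or.inl (by rw [hT1, Finset.mem_filter]; exact ⟨hwE, h31, h42⟩))
      · have h32 : s3 = s2 := by linear_combination h
        have h41 : s4 = s1 := by linear_combination -hU' - h32
        exact Or.inl (Or.inr (by rw [hT2, Finset.mem_filter]; exact ⟨hwE, h32, h41⟩))
  have cT : ∀ (T : Finset ((ZMod p × ZMod p) × (ZMod p × ZMod p)))
      (f : (ZMod p × ZMod p) × (ZMod p × ZMod p) → ZMod p × ZMod p),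
      (∀ w ∈ T, f w ∈ E2 (p := p)) → (Set.InjOn f T) → T.card ≤ (p-1)^2 := by
    intro T f hmem hinj
    have := Finset.card_le_card_of_injOn f hmem hinj
    simpa [card_E2] using this
  have c1 : T1.card ≤ (p-1)^2 := by
    refine cT T1 (fun w => (w.1.1, w.2.1)) ?_ ?_
    · intro w hw
      rw [hT1, Finset.mem_filter] at hw
      obtain ⟨h1, h3, h2, h4⟩ := memE4 w hw.1
      rw [E2, Finset.mem_product]
      exact ⟨mem_e0.mpr h1, mem_e0.mpr h2⟩
    · intro w hw w' hw' h
      simp only [hT1, Finset.coe_filter, Set.mem_setOf_eq] at hw hw'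
      obtain ⟨-, e1, e2⟩ := hw
      obtain ⟨-, e1', e2'⟩ := hw'
      simp only [Prod.mk.injEq] at h
      obtain ⟨h1, h2⟩ := h
      have h3 : w.1.2 = w'.1.2 := by rw [e1, e1', h1]
      have h4 : w.2.2 = w'.2.2 := by rw [e2, e2', h2]
      exact Prod.ext (Prod.ext h1 h3) (Prod.ext h2 h4)
  have c2 : T2.card ≤ (p-1)^2 := by
    refine cT T2 (fun w => (w.1.1, w.2.1)) ?_ ?_
    · intro w hw
      rw [hT2, Finset.mem_filter] at hw
      obtain ⟨h1, h3, h2, h4⟩ := memE4 w hw.1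
      rw [E2, Finset.mem_product]
      exact ⟨mem_e0.mpr h1, mem_e0.mpr h2⟩
    · intro w hw w' hw' h
      simp only [hT2, Finset.coe_filter, Set.mem_setOf_eq] at hw hw'
      obtain ⟨-, e1, e2⟩ := hw
      obtain ⟨-, e1', e2'⟩ := hw'
      simp only [Prod.mk.injEq] at h
      obtain ⟨h1, h2⟩ := h
      have h3 : w.1.2 = w'.1.2 := by rw [e1, e1', h2]
      have h4 : w.2.2 = w'.2.2 := by rw [e2, e2', h1]
      exact Prod.ext (Prod.ext h1 h3) (Prod.ext h2 h4)
  have c3 : T3.card ≤ (p-1)^2 := by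
    refine cT T3 (fun w => w.1) ?_ ?_
    · intro w hw
      rw [hT3, Finset.mem_filter, E4, Finset.mem_product] at hw
      exact hw.1.1
    · intro w hw w' hw' h
      simp only [hT3, Finset.coe_filter, Set.mem_setOf_eq] at hw hw'
      obtain ⟨-, e1, e2⟩ := hw
      obtain ⟨-, e1', e2'⟩ := hw'
      have h1 : w.1.1 = w'.1.1 := congrArg Prod.fst h
      have h3 : w.1.2 = w'.1.2 := congrArg Prod.snd h
      have h2 : w.2.1 = w'.2.1 := by rw [e1, e1', h1]
      have h4 : w.2.2 = w'.2.2 := by rw [e2, e2', h3]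
      exact Prod.ext (Prod.ext h1 h3) (Prod.ext h2 h4)
  calc N4 (p := p) ≤ (T1 ∪ T2 ∪ T3).card := Finset.card_le_card subs
    _ ≤ (T1 ∪ T2).card + T3.card := Finset.card_union_le _ _
    _ ≤ T1.card + T2.card + T3.card := by
        have := Finset.card_union_le T1 T2
        omega
    _ ≤ 3 * (p-1)^2 := by omega

lemma Kl_bound {a b : ZMod p} (ha : a ≠ 0) (hb : b ≠ 0) :
    ‖Kl a b‖ ^ 4 ≤ 3 * (p:ℝ)^3 := by
  have hp2 : 2 ≤ p := hp.out.two_le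
  have hP1 : (0:ℝ) < (p:ℝ) - 1 := by
    have : (2:ℝ) ≤ (p:ℝ) := by exact_mod_cast hp2
    linarith
  have hmomR : ∑ a' : ZMod p, ∑ b' : ZMod p, (normSq (Kl a' b'))^2
      = (p:ℝ)^2 * (N4 (p := p) : ℝ) := by
    have := Kl_moment (p := p)
    exact_mod_cast this
  have hsum : ∑ c ∈ e0 (p := p), (normSq (Kl (a * c) (b * c⁻¹)))^2
      = ((p:ℝ) - 1) * (normSq (Kl a b))^2 := by
    rw [Finset.sum_congr rfl (fun c hc => by rw [Kl_invar (mem_e0.mp hc)]),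
      Finset.sum_const, card_e0, nsmul_eq_mul]
    congr 1
    have h1 : (1:ℕ) ≤ p := hp.out.one_lt.le
    push_cast [Nat.cast_sub h1]
    ring
  have himg : ∑ c ∈ e0 (p := p), (normSq (Kl (a * c) (b * c⁻¹)))^2
      = ∑ q ∈ (e0 (p := p)).image (fun c => (a * c, b * c⁻¹)), (normSq (Kl q.1 q.2))^2 := by
    rw [Finset.sum_image (fun c _ c' _ h => by
      simp only [Prod.mk.injEq] at h
      exact mul_left_cancel₀ ha h.1)]
  have hle : ∑ q ∈ (e0 (p := p)).image (fun c => (a * c, b * c⁻¹)), (normSq (Kl q.1 q.2))^2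
      ≤ ∑ a' : ZMod p, ∑ b' : ZMod p, (normSq (Kl a' b'))^2 := by
    have h1 : ∑ q ∈ (e0 (p := p)).image (fun c => (a * c, b * c⁻¹)), (normSq (Kl q.1 q.2))^2
        ≤ ∑ q : ZMod p × ZMod p, (normSq (Kl q.1 q.2))^2 :=
      Finset.sum_le_sum_of_subset_of_nonneg (Finset.subset_univ _)
        (fun q _ _ => by positivity)
    calc _ ≤ ∑ q : ZMod p × ZMod p, (normSq (Kl q.1 q.2))^2 := h1
      _ = ∑ a' : ZMod p, ∑ b' : ZMod p, (normSq (Kl a' b'))^2 :=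
          Fintype.sum_prod_type (f := fun q => (normSq (Kl q.1 q.2))^2)
  have hN4 : (N4 (p := p) : ℝ) ≤ 3 * ((p:ℝ) - 1)^2 := by
    have h := N4_bound (p := p)
    have h1 : (1:ℕ) ≤ p := hp.out.one_lt.le
    have : ((N4 (p := p) : ℝ)) ≤ ((3 * (p-1)^2 : ℕ) : ℝ) := by exact_mod_cast h
    calc (N4 (p := p) : ℝ) ≤ ((3 * (p-1)^2 : ℕ) : ℝ) := this
      _ = 3 * ((p:ℝ) - 1)^2 := by push_cast [Nat.cast_sub h1]; ring
  have key : ((p:ℝ) - 1) * (normSq (Kl a b))^2 ≤ (p:ℝ)^2 * (3 * ((p:ℝ) - 1)^2) := by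
    calc ((p:ℝ) - 1) * (normSq (Kl a b))^2 = _ := hsum.symm
      _ = _ := himg
      _ ≤ ∑ a' : ZMod p, ∑ b' : ZMod p, (normSq (Kl a' b'))^2 := hle
      _ = (p:ℝ)^2 * (N4 (p := p) : ℝ) := hmomR
      _ ≤ (p:ℝ)^2 * (3 * ((p:ℝ) - 1)^2) := by
          apply mul_le_mul_of_nonneg_left hN4 (by positivity)
  have key2 : (normSq (Kl a b))^2 ≤ 3 * (p:ℝ)^2 * ((p:ℝ) - 1) := by
    have h2 : (p:ℝ)^2 * (3 * ((p:ℝ) - 1)^2) = ((p:ℝ) - 1) * (3 * (p:ℝ)^2 * ((p:ℝ)-1)) := by ring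
    rw [h2] at key
    exact (mul_le_mul_iff_right₀ hP1).mp key
  have habs : ‖Kl a b‖ ^ 4 = (normSq (Kl a b))^2 := by
    rw [show (4:ℕ) = 2 * 2 from rfl, pow_mul, Complex.sq_norm]
  rw [habs]
  calc (normSq (Kl a b))^2 ≤ 3 * (p:ℝ)^2 * ((p:ℝ) - 1) := key2
    _ ≤ 3 * (p:ℝ)^3 := by nlinarith [hP1, sq_nonneg (p:ℝ)]


noncomputable def S (A : Finset (ZMod p)) (t : ZMod p) : ℂ := ∑ a ∈ A, ψ (t * a)

lemma S_zero (A : Finset (ZMod p)) : S A 0 = (A.card : ℂ) := by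
  simp [S]

lemma S_sq (A : Finset (ZMod p)) (t : ZMod p) :
    (normSq (S A t) : ℂ) = ∑ q ∈ A ×ˢ A, ψ (t * (q.1 - q.2)) := by
  rw [← Complex.mul_conj, S, map_sum]
  rw [Finset.sum_congr rfl (fun b _ => psi_conj (t * b)), Finset.sum_mul_sum,
    ← Finset.sum_product']
  refine sum_congr rfl fun q _ => ?_
  rw [← AddChar.map_add_eq_mul]
  congr 1
  ring

lemma parseval (A : Finset (ZMod p)) :
    ∑ t : ZMod p, (normSq (S A t) : ℂ) = (p : ℂ) * A.card := by
  simp only [S_sq]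
  rw [Finset.sum_comm]
  have step : ∀ q ∈ A ×ˢ A, (∑ t : ZMod p, ψ (t * (q.1 - q.2)))
      = if q.1 = q.2 then (p:ℂ) else 0 := by
    intro q _
    rw [psi_orth]
    simp only [sub_eq_zero]
  rw [Finset.sum_congr rfl step, Finset.sum_product]
  have inner : ∀ a ∈ A, (∑ b ∈ A, if a = b then (p:ℂ) else 0) = (p:ℂ) := by
    intro a ha
    rw [Finset.sum_ite_eq A a (fun _ => (p:ℂ))]
    exact if_pos ha
  rw [Finset.sum_congr rfl inner, Finset.sum_const, nsmul_eq_mul]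
  ring

/-- number of representations of `s` as difference, as a complex number -/
noncomputable def rr (A : Finset (ZMod p)) (s : ZMod p) : ℂ :=
  ∑ q ∈ A ×ˢ A, (if q.1 - q.2 = s then 1 else 0)

lemma rr_fourier (A : Finset (ZMod p)) (s : ZMod p) :
    ∑ t : ZMod p, (normSq (S A t) : ℂ) * ψ (-(t * s)) = (p:ℂ) * rr A s := by
  simp only [S_sq, Finset.sum_mul]
  rw [Finset.sum_comm]
  have step : ∀ q ∈ A ×ˢ A, (∑ t : ZMod p, ψ (t * (q.1 - q.2)) * ψ (-(t * s)))
      = (p:ℂ) * (if q.1 - q.2 = s then 1 else 0) := by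
    intro q _
    have merge : ∀ t : ZMod p, ψ (t * (q.1 - q.2)) * ψ (-(t * s)) = ψ (t * (q.1 - q.2 - s)) := by
      intro t
      rw [← AddChar.map_add_eq_mul]
      congr 1
      ring
    rw [Finset.sum_congr rfl (fun t _ => merge t), psi_orth]
    by_cases h : q.1 - q.2 = s
    · rw [if_pos (by rw [h, sub_self]), if_pos h]; ring
    · rw [if_neg (by rw [sub_eq_zero]; exact h), if_neg h]; ring
  rw [Finset.sum_congr rfl step, ← Finset.mul_sum, rr]

/-- the number of solutions `(a-b)(c-d) = x`, as a complex number -/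
noncomputable def RR (A B : Finset (ZMod p)) (x : ZMod p) : ℂ :=
  ∑ q ∈ (A ×ˢ A) ×ˢ (B ×ˢ B), (if (q.1.1 - q.1.2) * (q.2.1 - q.2.2) = x then 1 else 0)

lemma RR_conv (A B : Finset (ZMod p)) {x : ZMod p} (hx : x ≠ 0) :
    RR A B x = ∑ s ∈ e0 (p := p), rr A s * rr B (x * s⁻¹) := by
  have expand : ∀ s : ZMod p, rr A s * rr B (x * s⁻¹)
      = ∑ q ∈ (A ×ˢ A) ×ˢ (B ×ˢ B),
          (if q.1.1 - q.1.2 = s then 1 else 0) * (if q.2.1 - q.2.2 = x * s⁻¹ then (1:ℂ) else 0) := by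
    intro s
    rw [rr, rr, Finset.sum_mul_sum, ← Finset.sum_product']
  rw [Finset.sum_congr rfl (fun s _ => expand s), Finset.sum_comm]
  refine sum_congr rfl fun q _ => ?_
  set u := q.1.1 - q.1.2
  set v := q.2.1 - q.2.2
  by_cases hu : u = 0
  · rw [Finset.sum_eq_zero, if_neg]
    · rw [hu, zero_mul]; exact fun h => hx h.symm
    · intro s hs
      rw [if_neg, zero_mul]
      rw [hu]
      exact fun h => (mem_e0.mp hs) h.symm
  · rw [Finset.sum_eq_single u]
    · rw [if_pos rfl, one_mul]
      have hiff : (v = x * u⁻¹) ↔ (u * v = x) := by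
        constructor
        · intro h; rw [h]; field_simp
        · intro h; rw [← h]; field_simp
      rw [if_congr hiff rfl rfl]
    · intro s _ hsu
      rw [if_neg (fun h => hsu h.symm), zero_mul]
    · intro hu2
      exact absurd (mem_e0.mpr hu) hu2

lemma RR_kloosterman (A B : Finset (ZMod p)) {x : ZMod p} (hx : x ≠ 0) :
    (p:ℂ)^2 * RR A B x
      = ∑ t : ZMod p, ∑ u : ZMod p,
          (normSq (S A t) : ℂ) * (normSq (S B u) : ℂ) * Kl (-t) (-(u * x)) := by
  rw [RR_conv A B hx, Finset.mul_sum]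
  have step1 : ∀ s ∈ e0 (p := p), (p:ℂ)^2 * (rr A s * rr B (x * s⁻¹))
      = (∑ t : ZMod p, (normSq (S A t) : ℂ) * ψ (-(t * s)))
        * (∑ u : ZMod p, (normSq (S B u) : ℂ) * ψ (-(u * (x * s⁻¹)))) := by
    intro s _
    rw [rr_fourier, rr_fourier]
    ring
  rw [Finset.sum_congr rfl step1]
  have step2 : ∀ s ∈ e0 (p := p),
      (∑ t : ZMod p, (normSq (S A t) : ℂ) * ψ (-(t * s)))
        * (∑ u : ZMod p, (normSq (S B u) : ℂ) * ψ (-(u * (x * s⁻¹))))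
      = ∑ t : ZMod p, ∑ u : ZMod p,
          ((normSq (S A t) : ℂ) * ψ (-(t * s))) * ((normSq (S B u) : ℂ) * ψ (-(u * (x * s⁻¹)))) := by
    intro s _
    rw [Finset.sum_mul_sum]
  rw [Finset.sum_congr rfl step2, Finset.sum_comm]
  refine sum_congr rfl fun t _ => ?_
  rw [Finset.sum_comm]
  refine sum_congr rfl fun u _ => ?_
  rw [Kl, Finset.mul_sum]
  refine sum_congr rfl fun s _ => ?_
  rw [mul_mul_mul_comm, ← AddChar.map_add_eq_mul]
  congr 1
  ring

lemma sum_split (g : ZMod p → ℂ) : ∑ t : ZMod p, g t = g 0 + ∑ t ∈ e0 (p := p), g t :=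
  (Finset.add_sum_erase _ g (Finset.mem_univ 0)).symm

lemma sum_split_real (g : ZMod p → ℝ) : ∑ t : ZMod p, g t = g 0 + ∑ t ∈ e0 (p := p), g t :=
  (Finset.add_sum_erase _ g (Finset.mem_univ 0)).symm

lemma parseval_real (A : Finset (ZMod p)) :
    ∑ t : ZMod p, normSq (S A t) = (p : ℝ) * A.card := by
  have := parseval A
  exact_mod_cast this

lemma normSq_S_zero (A : Finset (ZMod p)) : normSq (S A 0) = (A.card : ℝ)^2 := by
  rw [S_zero]
  rw [show ((A.card : ℕ) : ℂ) = (((A.card : ℕ) : ℝ) : ℂ) by push_cast; ring]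
  rw [Complex.normSq_ofReal]
  ring

lemma main_ineq (A B : Finset (ZMod p)) {x : ZMod p} (hx : x ≠ 0)
    (hno : ∀ a ∈ A, ∀ b ∈ A, ∀ c ∈ B, ∀ d ∈ B, (a - b) * (c - d) ≠ x)
    {C : ℝ} (hC : 0 ≤ C) (hC4 : 3 * (p:ℝ)^3 ≤ C^4) :
    (A.card:ℝ)^2 * (B.card:ℝ)^2 * ((p:ℝ) - 1)
      ≤ (A.card:ℝ)^2 * ((p:ℝ) * B.card) + (B.card:ℝ)^2 * ((p:ℝ) * A.card)
        + C * (((p:ℝ) * A.card) * ((p:ℝ) * B.card)) := by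
  classical
  set F : ZMod p → ZMod p → ℂ :=
    fun t u => (normSq (S A t) : ℂ) * (normSq (S B u) : ℂ) * Kl (-t) (-(u * x)) with hF
  have hRR : RR A B x = 0 := by
    rw [RR]
    apply Finset.sum_eq_zero
    intro q hq
    rw [Finset.mem_product] at hq
    obtain ⟨hq1, hq2⟩ := hq
    rw [Finset.mem_product] at hq1 hq2
    rw [if_neg (hno q.1.1 hq1.1 q.1.2 hq1.2 q.2.1 hq2.1 q.2.2 hq2.2)]
  have heq : (0 : ℂ) = ∑ t : ZMod p, ∑ u : ZMod p, F t u := by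
    rw [← RR_kloosterman A B hx, hRR, mul_zero]
  have hsplit : (0:ℂ) = F 0 0 + (∑ u ∈ e0 (p := p), F 0 u) + (∑ t ∈ e0 (p := p), F t 0)
      + ∑ t ∈ e0 (p := p), ∑ u ∈ e0 (p := p), F t u := by
    rw [heq, sum_split (fun t => ∑ u : ZMod p, F t u)]
    rw [sum_split (fun u => F 0 u)]
    rw [Finset.sum_congr rfl (fun t _ => sum_split (fun u => F t u)), Finset.sum_add_distrib]
    ring
  have hF00 : F 0 0 = ((A.card:ℝ)^2 * (B.card:ℝ)^2 : ℝ) * ((p:ℂ) - 1) := by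
    rw [hF]
    simp only [neg_zero, zero_mul]
    rw [Kl_zero_zero, normSq_S_zero, normSq_S_zero]
    push_cast
    ring
  have hsumY : ∑ u ∈ e0 (p := p), (normSq (S B u) : ℂ) = ((p:ℝ) * B.card - (B.card:ℝ)^2 : ℝ) := by
    have h1 := parseval B
    rw [sum_split (fun u => (normSq (S B u) : ℂ)), normSq_S_zero] at h1
    push_cast at h1 ⊢
    linear_combination h1
  have hsumX : ∑ t ∈ e0 (p := p), (normSq (S A t) : ℂ) = ((p:ℝ) * A.card - (A.card:ℝ)^2 : ℝ) := by
    have h1 := parseval A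
    rw [sum_split (fun t => (normSq (S A t) : ℂ)), normSq_S_zero] at h1
    push_cast at h1 ⊢
    linear_combination h1
  have hrow0 : ∑ u ∈ e0 (p := p), F 0 u
      = -((A.card:ℝ)^2 : ℝ) * (((p:ℝ) * B.card - (B.card:ℝ)^2 : ℝ) : ℂ) := by
    have step : ∀ u ∈ e0 (p := p), F 0 u = -(((A.card:ℝ)^2:ℝ):ℂ) * (normSq (S B u) : ℂ) := by
      intro u hu
      rw [hF]
      simp only [neg_zero]
      rw [Kl_zero_right (neg_ne_zero.mpr (mul_ne_zero (mem_e0.mp hu) hx)), normSq_S_zero]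
      push_cast
      ring
    rw [Finset.sum_congr rfl step, ← Finset.mul_sum, hsumY]
  have hcol0 : ∑ t ∈ e0 (p := p), F t 0
      = -((B.card:ℝ)^2 : ℝ) * (((p:ℝ) * A.card - (A.card:ℝ)^2 : ℝ) : ℂ) := by
    have step : ∀ t ∈ e0 (p := p), F t 0 = -(((B.card:ℝ)^2:ℝ):ℂ) * (normSq (S A t) : ℂ) := by
      intro t ht
      rw [hF]
      simp only [zero_mul, neg_zero]
      rw [Kl_left_zero (neg_ne_zero.mpr (mem_e0.mp ht)), normSq_S_zero]
      push_cast
      ring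
    rw [Finset.sum_congr rfl step, ← Finset.mul_sum, hsumX]
  set E : ℂ := ∑ t ∈ e0 (p := p), ∑ u ∈ e0 (p := p), F t u with hE
  set r : ℝ := (A.card:ℝ)^2 * (B.card:ℝ)^2 * ((p:ℝ) - 1)
    - (A.card:ℝ)^2 * ((p:ℝ) * B.card - (B.card:ℝ)^2)
    - (B.card:ℝ)^2 * ((p:ℝ) * A.card - (A.card:ℝ)^2) with hr
  have hkey : (r : ℂ) = -E := by
    rw [hr]
    rw [hF00, hrow0, hcol0] at hsplit
    push_cast at hsplit ⊢
    linear_combination -hsplit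
  have hKlb : ∀ t ∈ e0 (p := p), ∀ u ∈ e0 (p := p), ‖Kl (-t) (-(u * x))‖ ≤ C := by
    intro t ht u hu
    have hb := Kl_bound (p := p) (neg_ne_zero.mpr (mem_e0.mp ht))
      (neg_ne_zero.mpr (mul_ne_zero (mem_e0.mp hu) hx))
    exact le_of_pow_le_pow_left₀ (by norm_num) hC (le_trans hb hC4)
  have hXle : ∑ t ∈ e0 (p := p), normSq (S A t) ≤ (p:ℝ) * A.card := by
    rw [← parseval_real A]
    exact Finset.sum_le_sum_of_subset_of_nonneg (Finset.erase_subset _ _)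
      (fun t _ _ => normSq_nonneg _)
  have hYle : ∑ u ∈ e0 (p := p), normSq (S B u) ≤ (p:ℝ) * B.card := by
    rw [← parseval_real B]
    exact Finset.sum_le_sum_of_subset_of_nonneg (Finset.erase_subset _ _)
      (fun u _ _ => normSq_nonneg _)
  have hXnn : (0:ℝ) ≤ ∑ t ∈ e0 (p := p), normSq (S A t) :=
    Finset.sum_nonneg fun t _ => normSq_nonneg _
  have hYnn : (0:ℝ) ≤ ∑ u ∈ e0 (p := p), normSq (S B u) :=
    Finset.sum_nonneg fun u _ => normSq_nonneg _
  have hEb : ‖E‖ ≤ C * (((p:ℝ) * A.card) * ((p:ℝ) * B.card)) := by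
    have step1 : ‖E‖
        ≤ ∑ t ∈ e0 (p := p), ∑ u ∈ e0 (p := p), normSq (S A t) * normSq (S B u) * C := by
      refine (norm_sum_le _ _).trans (Finset.sum_le_sum fun t ht => ?_)
      refine (norm_sum_le _ _).trans (Finset.sum_le_sum fun u hu => ?_)
      rw [hF]
      simp only [norm_mul, Complex.norm_real, Real.norm_eq_abs,
        _root_.abs_of_nonneg (normSq_nonneg _)]
      have h0 : (0:ℝ) ≤ normSq (S A t) * normSq (S B u) :=
        mul_nonneg (normSq_nonneg _) (normSq_nonneg _)
      calc normSq (S A t) * normSq (S B u) * ‖Kl (-t) (-(u*x))‖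
          ≤ normSq (S A t) * normSq (S B u) * C :=
            mul_le_mul_of_nonneg_left (hKlb t ht u hu) h0
        _ = _ := rfl
    have step2 : ∑ t ∈ e0 (p := p), ∑ u ∈ e0 (p := p), normSq (S A t) * normSq (S B u) * C
        = (∑ t ∈ e0 (p := p), normSq (S A t)) * (∑ u ∈ e0 (p := p), normSq (S B u)) * C := by
      rw [Finset.sum_congr rfl (fun t _ => by rw [← Finset.sum_mul, ← Finset.mul_sum])]
      rw [← Finset.sum_mul, ← Finset.sum_mul]
    refine step1.trans (step2.le.trans ?_)
    have h1 : (∑ t ∈ e0 (p := p), normSq (S A t)) * (∑ u ∈ e0 (p := p), normSq (S B u))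
        ≤ ((p:ℝ) * A.card) * ((p:ℝ) * B.card) :=
      mul_le_mul hXle hYle hYnn (le_trans hXnn hXle)
    calc (∑ t ∈ e0 (p := p), normSq (S A t)) * (∑ u ∈ e0 (p := p), normSq (S B u)) * C
        ≤ (((p:ℝ) * A.card) * ((p:ℝ) * B.card)) * C := mul_le_mul_of_nonneg_right h1 hC
      _ = C * (((p:ℝ) * A.card) * ((p:ℝ) * B.card)) := by ring
  have hrle : r ≤ C * (((p:ℝ) * A.card) * ((p:ℝ) * B.card)) := by
    calc r ≤ |r| := le_abs_self r
      _ = ‖((r:ℝ):ℂ)‖ := by rw [Complex.norm_real, Real.norm_eq_abs]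
      _ = ‖E‖ := by rw [hkey, norm_neg]
      _ ≤ _ := hEb
  rw [hr] at hrle
  have hAnn : (0:ℝ) ≤ (A.card:ℝ)^2 * (B.card:ℝ)^2 := by positivity
  nlinarith [hrle, hAnn]

end Aux

lemma numeric_contra {γ P : ℝ} (hγ0 : 0 < γ) (hγ1 : γ ≤ 1) (hP : 3 ≤ P)
    (h163 : 16 ≤ 3*γ*P) (hfin : γ*P^2*(P-1) ≤ 2*P^2 + γ/8*P^3) : False := by
  have hP0 : 0 < P := by linarith
  have hPP : 0 < P*P := mul_pos hP0 hP0
  have f2 : 16*(P*P) ≤ (3*γ*P)*(P*P) := mul_le_mul_of_nonneg_right h163 hPP.le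
  have f3 : γ*(P*P) ≤ 1*(P*P) := mul_le_mul_of_nonneg_right hγ1 hPP.le
  nlinarith [hfin, f2, f3, hPP]

/-- For dense subsets `E₁, E₂` of `ℤ/pℤ` with `p` a large prime,
`(E₁ - E₁)·(E₂ - E₂) = ℤ/pℤ`. -/
theorem diff_product_eq_univ_prime (α β : ℝ) (hα : 0 < α) (hβ : 0 < β) :
    ∃ p₀ : ℕ, ∀ p : ℕ, p.Prime → p₀ ≤ p →
      ∀ E₁ E₂ : Finset (ZMod p),
        α * p ≤ E₁.card → β * p ≤ E₂.card →
        ∀ x : ZMod p,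
          ∃ a₁ ∈ E₁, ∃ b₁ ∈ E₁, ∃ a₂ ∈ E₂, ∃ b₂ ∈ E₂,
            x = (a₁ - b₁) * (a₂ - b₂) := by
  set γ := α * β with hγdef
  have hγ0 : 0 < γ := mul_pos hα hβ
  refine ⟨⌈3 * (8/γ)^4 + 16/(3*γ) + 3⌉₊, fun p hpp hple E₁ E₂ hE₁ hE₂ x => ?_⟩
  haveI : Fact p.Prime := ⟨hpp⟩
  have hceil : 3 * (8/γ)^4 + 16/(3*γ) + 3 ≤ (p:ℝ) := by
    have h := Nat.ceil_le.mp hple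
    exact_mod_cast h
  have ht1 : 0 < (8/γ)^4 := by positivity
  have ht2 : 0 < 16/(3*γ) := by positivity
  have hp3 : (3:ℝ) ≤ (p:ℝ) := by linarith
  have hppos : (0:ℝ) < p := by linarith
  have hm0 : (0:ℝ) < E₁.card := lt_of_lt_of_le (by positivity) hE₁
  have hn0 : (0:ℝ) < E₂.card := lt_of_lt_of_le (by positivity) hE₂
  have hA : E₁.Nonempty := Finset.card_pos.mp (by exact_mod_cast hm0)
  have hB : E₂.Nonempty := Finset.card_pos.mp (by exact_mod_cast hn0)
  by_cases hx : x = 0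
  · obtain ⟨a, ha⟩ := hA
    obtain ⟨c, hc⟩ := hB
    exact ⟨a, ha, a, ha, c, hc, c, hc, by rw [hx, sub_self, zero_mul]⟩
  · by_contra hcon
    push_neg at hcon
    have hno : ∀ a ∈ E₁, ∀ b ∈ E₁, ∀ c ∈ E₂, ∀ d ∈ E₂, (a - b) * (c - d) ≠ x := by
      intro a ha b hb c hc d hd h
      exact hcon a ha b hb c hc d hd h.symm
    set C := γ/8 * (p:ℝ) with hC
    have hCpos : (0:ℝ) ≤ C := by positivity
    have hC4 : 3 * (p:ℝ)^3 ≤ C^4 := by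
      rw [hC]
      have hpq : 3 * (8/γ)^4 ≤ (p:ℝ) := by linarith
      have step : (γ/8)^4 * ((p:ℝ)^3 * (3 * (8/γ)^4)) ≤ (γ/8)^4 * ((p:ℝ)^3 * (p:ℝ)) := by
        apply mul_le_mul_of_nonneg_left _ (by positivity)
        apply mul_le_mul_of_nonneg_left hpq (by positivity)
      calc 3 * (p:ℝ)^3 = (γ/8)^4 * ((p:ℝ)^3 * (3 * (8/γ)^4)) := by
            field_simp
        _ ≤ (γ/8)^4 * ((p:ℝ)^3 * (p:ℝ)) := step
        _ = (γ/8 * (p:ℝ))^4 := by ring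
    have hin := main_ineq E₁ E₂ hx hno hCpos hC4
    set m := (E₁.card : ℝ) with hmdef
    set n := (E₂.card : ℝ) with hndef
    have hmp : m ≤ (p:ℝ) := by
      have h := Finset.card_le_univ E₁
      rw [ZMod.card] at h
      rw [hmdef]
      exact_mod_cast h
    have hnp : n ≤ (p:ℝ) := by
      have h := Finset.card_le_univ E₂
      rw [ZMod.card] at h
      rw [hndef]
      exact_mod_cast h
    have hmn : γ * (p:ℝ)^2 ≤ m * n := by
      have h := mul_le_mul hE₁ hE₂ (by positivity) hm0.le
      have e : γ * (p:ℝ)^2 = (α*(p:ℝ))*(β*(p:ℝ)) := by rw [hγdef]; ring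
      rw [e]
      exact h
    have hmnpos : (0:ℝ) < m * n := mul_pos hm0 hn0
    have hp1 : (0:ℝ) ≤ (p:ℝ) - 1 := by linarith
    have l1 : (m*n) * (γ*(p:ℝ)^2*((p:ℝ)-1)) ≤ m^2*n^2*((p:ℝ)-1) := by
      have h1 : (m*n) * (γ*(p:ℝ)^2) ≤ (m*n)*(m*n) :=
        mul_le_mul_of_nonneg_left hmn hmnpos.le
      have h2 := mul_le_mul_of_nonneg_right h1 hp1
      calc (m*n)*(γ*(p:ℝ)^2*((p:ℝ)-1)) = (m*n)*(γ*(p:ℝ)^2)*((p:ℝ)-1) := by ring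
        _ ≤ (m*n)*(m*n)*((p:ℝ)-1) := h2
        _ = m^2*n^2*((p:ℝ)-1) := by ring
    have l2 : m^2*((p:ℝ)*n) + n^2*((p:ℝ)*m) + C*(((p:ℝ)*m)*((p:ℝ)*n))
        ≤ (m*n)*(2*(p:ℝ)^2 + γ/8*(p:ℝ)^3) := by
      rw [hC]
      have e1 : m^2*((p:ℝ)*n) = (m*n)*((p:ℝ)*m) := by ring
      have e2 : n^2*((p:ℝ)*m) = (m*n)*((p:ℝ)*n) := by ring
      have b1 : (m*n)*((p:ℝ)*m) ≤ (m*n)*((p:ℝ)*(p:ℝ)) := by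
        apply mul_le_mul_of_nonneg_left _ hmnpos.le
        exact mul_le_mul_of_nonneg_left hmp hppos.le
      have b2 : (m*n)*((p:ℝ)*n) ≤ (m*n)*((p:ℝ)*(p:ℝ)) := by
        apply mul_le_mul_of_nonneg_left _ hmnpos.le
        exact mul_le_mul_of_nonneg_left hnp hppos.le
      have e3 : (γ/8*(p:ℝ))*(((p:ℝ)*m)*((p:ℝ)*n)) = (m*n)*(γ/8*(p:ℝ)^3) := by ring
      have e4 : (m*n)*(2*(p:ℝ)^2 + γ/8*(p:ℝ)^3)
          = (m*n)*((p:ℝ)*(p:ℝ)) + (m*n)*((p:ℝ)*(p:ℝ)) + (m*n)*(γ/8*(p:ℝ)^3) := by ring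
      rw [e1, e2, e3, e4]
      linarith
    have step1 : (m*n) * (γ*(p:ℝ)^2*((p:ℝ)-1)) ≤ (m*n) * (2*(p:ℝ)^2 + γ/8*(p:ℝ)^3) := by
      calc (m*n) * (γ*(p:ℝ)^2*((p:ℝ)-1)) ≤ m^2*n^2*((p:ℝ)-1) := l1
        _ ≤ m^2*((p:ℝ)*n) + n^2*((p:ℝ)*m) + C*(((p:ℝ)*m)*((p:ℝ)*n)) := hin
        _ ≤ (m*n)*(2*(p:ℝ)^2 + γ/8*(p:ℝ)^3) := l2
    have hfin : γ*(p:ℝ)^2*((p:ℝ)-1) ≤ 2*(p:ℝ)^2 + γ/8*(p:ℝ)^3 := by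
      by_contra hcontra
      push_neg at hcontra
      have hlt := mul_lt_mul_of_pos_left hcontra hmnpos
      linarith [step1, hlt]
    have hα1 : α ≤ 1 := by
      have h1 : α * (p:ℝ) ≤ 1 * (p:ℝ) := by linarith [le_trans hE₁ hmp]
      exact le_of_mul_le_mul_right h1 hppos
    have hβ1 : β ≤ 1 := by
      have h1 : β * (p:ℝ) ≤ 1 * (p:ℝ) := by linarith [le_trans hE₂ hnp]
      exact le_of_mul_le_mul_right h1 hppos
    have hγ1 : γ ≤ 1 := by
      rw [hγdef]
      exact mul_le_one₀ hα1 hβ.le hβ1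
    have h163 : 16 ≤ 3*γ*(p:ℝ) := by
      have h1 : 16/(3*γ) ≤ (p:ℝ) := by linarith
      have h2 : 0 < 3*γ := by linarith
      calc (16:ℝ) = (16/(3*γ)) * (3*γ) := by field_simp
        _ ≤ (p:ℝ) * (3*γ) := mul_le_mul_of_nonneg_right h1 h2.le
        _ = 3*γ*(p:ℝ) := by ring
    exact numeric_contra hγ0 hγ1 hp3 h163 hfin
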